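/- Let γ ≥ 1 and C ≥ 0, and let g : ℝ^d → ℝ^d be continuously differentiable with ‖Dg(x)v‖² ≤ C(1 + ‖x‖)^{γ−1}‖v‖² for all x, v ∈ ℝ^d. Then: (i) ‖g(x) − g(y)‖² ≤ C(1 + ‖x‖ + ‖y‖)^{γ−1}‖x − y‖² for all x, y ∈ ℝ^d; and (ii) ‖g(x)‖² ≤ 2(‖g(0)‖² + C)(1 + ‖x‖)^{γ+1} for all x ∈ ℝ^d. -/

import Mathlib

/-- Squared polynomial Lipschitz and polynomial growth estimates for a
diffusion-coefficient column whose first derivative grows polynomially (in squared form). -/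
theorem stmt_3 {d : ℕ} (γ C : ℝ) (hγ : 1 ≤ γ) (hC : 0 ≤ C)
    (g : EuclideanSpace ℝ (Fin d) → EuclideanSpace ℝ (Fin d))
    (hg : ContDiff ℝ 1 g)
    (hDg : ∀ x v : EuclideanSpace ℝ (Fin d),
      ‖fderiv ℝ g x v‖ ^ 2 ≤ C * (1 + ‖x‖) ^ (γ - 1) * ‖v‖ ^ 2) :
    (∀ x y : EuclideanSpace ℝ (Fin d),
      ‖g x - g y‖ ^ 2 ≤ C * (1 + ‖x‖ + ‖y‖) ^ (γ - 1) * ‖x - y‖ ^ 2) ∧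
    (∀ x : EuclideanSpace ℝ (Fin d),
      ‖g x‖ ^ 2 ≤ 2 * (‖g (0 : EuclideanSpace ℝ (Fin d))‖ ^ 2 + C) * (1 + ‖x‖) ^ (γ + 1)) := by
  have hdiff : Differentiable ℝ g := hg.differentiable one_ne_zero
  have part1 : ∀ x y : EuclideanSpace ℝ (Fin d),
      ‖g x - g y‖ ^ 2 ≤ C * (1 + ‖x‖ + ‖y‖) ^ (γ - 1) * ‖x - y‖ ^ 2 := by
    intro x y
    set R := ‖x‖ + ‖y‖ with hR
    have hR0 : 0 ≤ R := add_nonneg (norm_nonneg _) (norm_nonneg _)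
    have hbase : (0:ℝ) < 1 + R := by linarith
    have hCR : 0 ≤ C * (1 + R) ^ (γ - 1) :=
      mul_nonneg hC (Real.rpow_nonneg (by linarith) _)
    set K := Real.sqrt (C * (1 + R) ^ (γ - 1)) with hKdef
    have hK0 : 0 ≤ K := Real.sqrt_nonneg _
    have hK2 : K ^ 2 = C * (1 + R) ^ (γ - 1) := Real.sq_sqrt hCR
    have hbound : ∀ z ∈ Metric.closedBall (0 : EuclideanSpace ℝ (Fin d)) R,
        ‖fderiv ℝ g z‖ ≤ K := by
      intro z hz
      rw [Metric.mem_closedBall, dist_zero_right] at hz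
      apply ContinuousLinearMap.opNorm_le_bound _ hK0
      intro v
      have h2 : ‖fderiv ℝ g z v‖ ^ 2 ≤ (K * ‖v‖) ^ 2 := by
        rw [mul_pow, hK2]
        refine le_trans (hDg z v) ?_
        have hr : (1 + ‖z‖) ^ (γ - 1) ≤ (1 + R) ^ (γ - 1) :=
          Real.rpow_le_rpow (by positivity) (by linarith) (by linarith)
        have := mul_le_mul_of_nonneg_right
          (mul_le_mul_of_nonneg_left hr hC) (sq_nonneg ‖v‖)
        linarith
      exact (pow_le_pow_iff_left₀ (norm_nonneg _)
        (mul_nonneg hK0 (norm_nonneg _)) two_ne_zero).mp h2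
    have hxmem : x ∈ Metric.closedBall (0 : EuclideanSpace ℝ (Fin d)) R := by
      rw [Metric.mem_closedBall, dist_zero_right]; linarith [norm_nonneg y]
    have hymem : y ∈ Metric.closedBall (0 : EuclideanSpace ℝ (Fin d)) R := by
      rw [Metric.mem_closedBall, dist_zero_right]; linarith [norm_nonneg x]
    have hlip : ‖g x - g y‖ ≤ K * ‖x - y‖ :=
      (convex_closedBall _ _).norm_image_sub_le_of_norm_fderiv_le
        (fun z _ => hdiff z) hbound hymem hxmem
    calc ‖g x - g y‖ ^ 2 ≤ (K * ‖x - y‖) ^ 2 :=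
          pow_le_pow_left₀ (norm_nonneg _) hlip 2
      _ = C * (1 + ‖x‖ + ‖y‖) ^ (γ - 1) * ‖x - y‖ ^ 2 := by
          rw [mul_pow, hK2, hR, ← add_assoc]
  refine ⟨part1, fun x => ?_⟩
  have h1 := part1 x 0
  simp only [norm_zero, add_zero, sub_zero] at h1
  have htri : ‖g x‖ ≤ ‖g 0‖ + ‖g x - g 0‖ := by
    have := norm_add_le (g 0) (g x - g 0)
    simpa using this
  have hx0 : (0:ℝ) ≤ ‖x‖ := norm_nonneg x
  have hb1 : (1:ℝ) ≤ 1 + ‖x‖ := by linarith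
  have hB1 : (1:ℝ) ≤ (1 + ‖x‖) ^ (γ + 1) :=
    Real.one_le_rpow hb1 (by linarith)
  have hAB : (1 + ‖x‖) ^ (γ - 1) * ‖x‖ ^ 2 ≤ (1 + ‖x‖) ^ (γ + 1) := by
    have h1' : ‖x‖ ^ 2 ≤ (1 + ‖x‖) ^ (2:ℕ) := by nlinarith
    calc (1 + ‖x‖) ^ (γ - 1) * ‖x‖ ^ 2
        ≤ (1 + ‖x‖) ^ (γ - 1) * (1 + ‖x‖) ^ (2:ℕ) := by
          exact mul_le_mul_of_nonneg_left h1' (Real.rpow_nonneg (by linarith) _)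
      _ = (1 + ‖x‖) ^ (γ + 1) := by
          rw [← Real.rpow_natCast (1 + ‖x‖) 2, ← Real.rpow_add (by linarith)]
          congr 1
          push_cast
          ring
  have hsq : ‖g x‖ ^ 2 ≤ 2 * ‖g 0‖ ^ 2 + 2 * ‖g x - g 0‖ ^ 2 := by
    nlinarith [norm_nonneg (g x), norm_nonneg (g 0), norm_nonneg (g x - g 0),
      sq_nonneg (‖g 0‖ - ‖g x - g 0‖)]
  nlinarith [norm_nonneg (g 0), sq_nonneg (‖g 0‖), mul_le_mul_of_nonneg_left hAB hC]
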